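/- Under the null hypothesis that F = G with F continuous, the variance of the Mann–Whitney statistic is Var(U_{mn}) = m n (m + n + 1) / 12. -/

import Mathlib

open MeasureTheory ProbabilityTheory Set

section Aux
variable (ν : Measure ℝ) [IsProbabilityMeasure ν]

lemma mw_diag_null (hat : ∀ x : ℝ, ν {x} = 0) :
    (ν.prod ν) {p : ℝ × ℝ | p.1 = p.2} = 0 := by
  have hms : MeasurableSet {p : ℝ × ℝ | p.1 = p.2} :=
    measurableSet_eq_fun measurable_fst measurable_snd
  rw [Measure.prod_apply hms]
  have h : ∀ x : ℝ, ν (Prod.mk x ⁻¹' {p : ℝ × ℝ | p.1 = p.2}) = 0 := by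
    intro x
    have : Prod.mk x ⁻¹' {p : ℝ × ℝ | p.1 = p.2} = {x} := by
      ext y; simp [eq_comm]
    rw [this]; exact hat x
  simp only [h]; simp

lemma mw_ae_ne2 (hat : ∀ x : ℝ, ν {x} = 0) :
    ∀ᵐ p ∂(ν.prod ν), p.1 ≠ (p.2 : ℝ) := by
  rw [ae_iff]; simpa using mw_diag_null ν hat

lemma mw_ae_ne3 (hat : ∀ x : ℝ, ν {x} = 0) :
    ∀ᵐ p ∂(ν.prod (ν.prod ν)),
      p.1 ≠ p.2.1 ∧ p.1 ≠ p.2.2 ∧ p.2.1 ≠ p.2.2 := by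
  have hm12 : MeasurableSet {p : ℝ × ℝ × ℝ | p.1 = p.2.1} :=
    measurableSet_eq_fun measurable_fst (measurable_fst.comp measurable_snd)
  have hm13 : MeasurableSet {p : ℝ × ℝ × ℝ | p.1 = p.2.2} :=
    measurableSet_eq_fun measurable_fst (measurable_snd.comp measurable_snd)
  have hm23 : MeasurableSet {p : ℝ × ℝ × ℝ | p.2.1 = p.2.2} :=
    measurableSet_eq_fun (measurable_fst.comp measurable_snd)
      (measurable_snd.comp measurable_snd)
  have h12 : (ν.prod (ν.prod ν)) {p : ℝ × ℝ × ℝ | p.1 = p.2.1} = 0 := by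
    rw [Measure.prod_apply hm12]
    have h : ∀ x : ℝ, (ν.prod ν) (Prod.mk x ⁻¹' {p : ℝ × ℝ × ℝ | p.1 = p.2.1}) = 0 := by
      intro x
      have : Prod.mk x ⁻¹' {p : ℝ × ℝ × ℝ | p.1 = p.2.1} = ({x} : Set ℝ) ×ˢ univ := by
        ext ⟨a, b⟩; simp [eq_comm]
      rw [this, Measure.prod_prod, hat x, zero_mul]
    simp only [h]; simp
  have h13 : (ν.prod (ν.prod ν)) {p : ℝ × ℝ × ℝ | p.1 = p.2.2} = 0 := by
    rw [Measure.prod_apply hm13]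
    have h : ∀ x : ℝ, (ν.prod ν) (Prod.mk x ⁻¹' {p : ℝ × ℝ × ℝ | p.1 = p.2.2}) = 0 := by
      intro x
      have : Prod.mk x ⁻¹' {p : ℝ × ℝ × ℝ | p.1 = p.2.2} = (univ : Set ℝ) ×ˢ {x} := by
        ext ⟨a, b⟩; simp [eq_comm]
      rw [this, Measure.prod_prod, hat x, mul_zero]
    simp only [h]; simp
  have h23 : (ν.prod (ν.prod ν)) {p : ℝ × ℝ × ℝ | p.2.1 = p.2.2} = 0 := by
    rw [Measure.prod_apply hm23]
    have h : ∀ x : ℝ, (ν.prod ν) (Prod.mk x ⁻¹' {p : ℝ × ℝ × ℝ | p.2.1 = p.2.2}) = 0 := by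
      intro x
      have : Prod.mk x ⁻¹' {p : ℝ × ℝ × ℝ | p.2.1 = p.2.2} = {q : ℝ × ℝ | q.1 = q.2} := by
        ext q; simp
      rw [this]; exact mw_diag_null ν hat
    simp only [h]; simp
  have a12 : ∀ᵐ p ∂(ν.prod (ν.prod ν)), p.1 ≠ (p.2.1 : ℝ) := by
    rw [ae_iff]; simpa using h12
  have a13 : ∀ᵐ p ∂(ν.prod (ν.prod ν)), p.1 ≠ (p.2.2 : ℝ) := by
    rw [ae_iff]; simpa using h13
  have a23 : ∀ᵐ p ∂(ν.prod (ν.prod ν)), p.2.1 ≠ (p.2.2 : ℝ) := by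
    rw [ae_iff]; simpa using h23
  exact a12.and (a13.and a23)

end Aux

lemma mw_two_ind {x y : ℝ} (h : x ≠ y) :
    (if y ≤ x then (1:ℝ) else 0) + (if x ≤ y then 1 else 0) = 1 := by
  rcases h.lt_or_gt with h'|h' <;> simp [h'.le, h'.not_ge]

lemma mw_three_max {x y z : ℝ} (hxy : x ≠ y) (hxz : x ≠ z) (hyz : y ≠ z) :
    (if y ≤ x then (1:ℝ) else 0) * (if z ≤ x then 1 else 0)
    + (if x ≤ y then (1:ℝ) else 0) * (if z ≤ y then 1 else 0)
    + (if x ≤ z then (1:ℝ) else 0) * (if y ≤ z then 1 else 0) = 1 := by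
  rcases hxy.lt_or_gt with h|h <;> rcases hxz.lt_or_gt with h'|h' <;>
    rcases hyz.lt_or_gt with h''|h'' <;>
      simp [h.le, h.not_ge, h'.le, h'.not_ge, h''.le, h''.not_ge] <;> linarith

lemma mw_three_min {x y z : ℝ} (hxy : x ≠ y) (hxz : x ≠ z) (hyz : y ≠ z) :
    (if x ≤ y then (1:ℝ) else 0) * (if x ≤ z then 1 else 0)
    + (if y ≤ x then (1:ℝ) else 0) * (if y ≤ z then 1 else 0)
    + (if z ≤ x then (1:ℝ) else 0) * (if z ≤ y then 1 else 0) = 1 := by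
  rcases hxy.lt_or_gt with h|h <;> rcases hxz.lt_or_gt with h'|h' <;>
    rcases hyz.lt_or_gt with h''|h'' <;>
      simp [h.le, h.not_ge, h'.le, h'.not_ge, h''.le, h''.not_ge] <;> linarith

lemma mw_integrable_ite {α : Type*} [MeasurableSpace α] {μ : Measure α} [IsFiniteMeasure μ]
    {c : α → Prop} [DecidablePred c] (hc : MeasurableSet {a | c a}) :
    Integrable (fun a => if c a then (1:ℝ) else 0) μ := by
  have h := (integrable_const (1:ℝ) (μ := μ)).indicator hc
  refine h.congr (ae_of_all _ fun a => ?_)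
  by_cases h' : c a <;> simp [Set.indicator_apply, h', Set.mem_setOf_eq]

lemma mw_integrable_ite_mul {α : Type*} [MeasurableSpace α] {μ : Measure α} [IsFiniteMeasure μ]
    {c d : α → Prop} [DecidablePred c] [DecidablePred d]
    (hc : MeasurableSet {a | c a}) (hd : MeasurableSet {a | d a}) :
    Integrable (fun a => (if c a then (1:ℝ) else 0) * (if d a then 1 else 0)) μ := by
  have h : Integrable (fun a => if c a ∧ d a then (1:ℝ) else 0) μ :=
    mw_integrable_ite (by rw [Set.setOf_and]; exact hc.inter hd)
  refine h.congr (ae_of_all _ fun a => ?_)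
  by_cases h1 : c a <;> by_cases h2 : d a <;> simp [h1, h2]


/-- Under the null hypothesis `F = G` with `F` continuous, the variance of the
Mann–Whitney statistic is `Var(U_{mn}) = m n (m + n + 1) / 12`. -/
theorem stmt_6 {Ω : Type*} [MeasurableSpace Ω] (μ : Measure Ω) [IsProbabilityMeasure μ]
    (m n : ℕ) (Xs : Fin m → Ω → ℝ) (Ys : Fin n → Ω → ℝ)
    (hXs : ∀ i, Measurable (Xs i)) (hYs : ∀ j, Measurable (Ys j))
    (ν : Measure ℝ) [IsProbabilityMeasure ν]
    (hatomless : ∀ x : ℝ, ν {x} = 0)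
    (hlawX : ∀ i, μ.map (Xs i) = ν) (hlawY : ∀ j, μ.map (Ys j) = ν)
    (hindep : iIndepFun (Sum.elim Xs Ys) μ) :
    variance (fun a => ∑ i, ∑ j, if Xs i a ≥ Ys j a then (1 : ℝ) else 0) μ
      = m * n * ((m : ℝ) + n + 1) / 12 := by
  classical
  set Z : Fin m ⊕ Fin n → Ω → ℝ := Sum.elim Xs Ys with hZdef
  have hZm : ∀ s, Measurable (Z s) := by rintro (i | j); exacts [hXs i, hYs j]
  have hlawZ : ∀ s, μ.map (Z s) = ν := by rintro (i | j); exacts [hlawX i, hlawY j]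
  have hpair : ∀ a b, a ≠ b → μ.map (fun ω => (Z a ω, Z b ω)) = ν.prod ν := by
    intro a b hab
    rw [(indepFun_iff_map_prod_eq_prod_map_map (hZm a).aemeasurable (hZm b).aemeasurable).mp
      (hindep.indepFun hab), hlawZ a, hlawZ b]
  have htrip : ∀ a b c, a ≠ b → a ≠ c → b ≠ c →
      μ.map (fun ω => (Z a ω, (Z b ω, Z c ω))) = ν.prod (ν.prod ν) := by
    intro a b c hab hac hbc
    have h1 : IndepFun (Z a) (fun ω => (Z b ω, Z c ω)) μ :=
      (hindep.indepFun_prodMk hZm b c a hab.symm hac.symm).symm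
    rw [(indepFun_iff_map_prod_eq_prod_map_map (hZm a).aemeasurable
      ((hZm b).prodMk (hZm c)).aemeasurable).mp h1, hlawZ a, hpair b c hbc]
  have key2 : ∀ a b : Fin m ⊕ Fin n, a ≠ b →
      ∫ ω, (if Z b ω ≤ Z a ω then (1:ℝ) else 0) ∂μ = 1/2 := by
    intro a b hab
    have hg1 : Measurable fun q : ℝ × ℝ => if q.2 ≤ q.1 then (1:ℝ) else 0 :=
      Measurable.ite (measurableSet_le measurable_snd measurable_fst)
        measurable_const measurable_const
    have hg2 : Measurable fun q : ℝ × ℝ => if q.1 ≤ q.2 then (1:ℝ) else 0 :=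
      Measurable.ite (measurableSet_le measurable_fst measurable_snd)
        measurable_const measurable_const
    have h1 : ∫ q : ℝ × ℝ, (if q.2 ≤ q.1 then (1:ℝ) else 0) ∂(ν.prod ν)
        = ∫ ω, (if Z b ω ≤ Z a ω then (1:ℝ) else 0) ∂μ := by
      rw [← hpair a b hab,
        integral_map ((hZm a).prodMk (hZm b)).aemeasurable hg1.aestronglyMeasurable]
    have h2 : ∫ q : ℝ × ℝ, (if q.1 ≤ q.2 then (1:ℝ) else 0) ∂(ν.prod ν)
        = ∫ ω, (if Z b ω ≤ Z a ω then (1:ℝ) else 0) ∂μ := by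
      rw [← hpair b a hab.symm,
        integral_map ((hZm b).prodMk (hZm a)).aemeasurable hg2.aestronglyMeasurable]
    have hi1 : Integrable (fun q : ℝ × ℝ => if q.2 ≤ q.1 then (1:ℝ) else 0) (ν.prod ν) :=
      mw_integrable_ite (measurableSet_le measurable_snd measurable_fst)
    have hi2 : Integrable (fun q : ℝ × ℝ => if q.1 ≤ q.2 then (1:ℝ) else 0) (ν.prod ν) :=
      mw_integrable_ite (measurableSet_le measurable_fst measurable_snd)
    have hsum : ∫ q : ℝ × ℝ,
        ((if q.2 ≤ q.1 then (1:ℝ) else 0) + (if q.1 ≤ q.2 then 1 else 0)) ∂(ν.prod ν) = 1 := by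
      rw [integral_congr_ae ((mw_ae_ne2 ν hatomless).mono fun q hq => mw_two_ind hq)]
      simp
    rw [integral_add hi1 hi2, h1, h2] at hsum
    linarith
  have key3max : ∀ a b c : Fin m ⊕ Fin n, a ≠ b → a ≠ c → b ≠ c →
      ∫ ω, (if Z b ω ≤ Z a ω then (1:ℝ) else 0) * (if Z c ω ≤ Z a ω then 1 else 0) ∂μ
        = 1/3 := by
    intro a b c hab hac hbc
    have m1 : MeasurableSet {p : ℝ × ℝ × ℝ | p.2.1 ≤ p.1} :=
      measurableSet_le (measurable_fst.comp measurable_snd) measurable_fst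
    have m2 : MeasurableSet {p : ℝ × ℝ × ℝ | p.2.2 ≤ p.1} :=
      measurableSet_le (measurable_snd.comp measurable_snd) measurable_fst
    have m3 : MeasurableSet {p : ℝ × ℝ × ℝ | p.1 ≤ p.2.1} :=
      measurableSet_le measurable_fst (measurable_fst.comp measurable_snd)
    have m4 : MeasurableSet {p : ℝ × ℝ × ℝ | p.2.2 ≤ p.2.1} :=
      measurableSet_le (measurable_snd.comp measurable_snd) (measurable_fst.comp measurable_snd)
    have m5 : MeasurableSet {p : ℝ × ℝ × ℝ | p.1 ≤ p.2.2} :=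
      measurableSet_le measurable_fst (measurable_snd.comp measurable_snd)
    have m6 : MeasurableSet {p : ℝ × ℝ × ℝ | p.2.1 ≤ p.2.2} :=
      measurableSet_le (measurable_fst.comp measurable_snd) (measurable_snd.comp measurable_snd)
    have hmeas_ite : ∀ {s : Set (ℝ × ℝ × ℝ)}, MeasurableSet s →
        Measurable (fun p => if p ∈ s then (1:ℝ) else 0) := fun hs =>
      Measurable.ite hs measurable_const measurable_const
    have hg1 : Measurable fun p : ℝ × ℝ × ℝ =>
        (if p.2.1 ≤ p.1 then (1:ℝ) else 0) * (if p.2.2 ≤ p.1 then 1 else 0) :=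
      (hmeas_ite m1).mul (hmeas_ite m2)
    have hg2 : Measurable fun p : ℝ × ℝ × ℝ =>
        (if p.1 ≤ p.2.1 then (1:ℝ) else 0) * (if p.2.2 ≤ p.2.1 then 1 else 0) :=
      (hmeas_ite m3).mul (hmeas_ite m4)
    have hg3 : Measurable fun p : ℝ × ℝ × ℝ =>
        (if p.1 ≤ p.2.2 then (1:ℝ) else 0) * (if p.2.1 ≤ p.2.2 then 1 else 0) :=
      (hmeas_ite m5).mul (hmeas_ite m6)
    have h1 : ∫ p : ℝ × ℝ × ℝ,
        ((if p.2.1 ≤ p.1 then (1:ℝ) else 0) * (if p.2.2 ≤ p.1 then 1 else 0)) ∂(ν.prod (ν.prod ν))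
        = ∫ ω, (if Z b ω ≤ Z a ω then (1:ℝ) else 0) * (if Z c ω ≤ Z a ω then 1 else 0) ∂μ := by
      rw [← htrip a b c hab hac hbc,
        integral_map ((hZm a).prodMk ((hZm b).prodMk (hZm c))).aemeasurable
          hg1.aestronglyMeasurable]
    have h2 : ∫ p : ℝ × ℝ × ℝ,
        ((if p.1 ≤ p.2.1 then (1:ℝ) else 0) * (if p.2.2 ≤ p.2.1 then 1 else 0)) ∂(ν.prod (ν.prod ν))
        = ∫ ω, (if Z b ω ≤ Z a ω then (1:ℝ) else 0) * (if Z c ω ≤ Z a ω then 1 else 0) ∂μ := by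
      rw [← htrip b a c hab.symm hbc hac,
        integral_map ((hZm b).prodMk ((hZm a).prodMk (hZm c))).aemeasurable
          hg2.aestronglyMeasurable]
    have h3 : ∫ p : ℝ × ℝ × ℝ,
        ((if p.1 ≤ p.2.2 then (1:ℝ) else 0) * (if p.2.1 ≤ p.2.2 then 1 else 0)) ∂(ν.prod (ν.prod ν))
        = ∫ ω, (if Z b ω ≤ Z a ω then (1:ℝ) else 0) * (if Z c ω ≤ Z a ω then 1 else 0) ∂μ := by
      rw [← htrip b c a hbc hab.symm hac.symm,
        integral_map ((hZm b).prodMk ((hZm c).prodMk (hZm a))).aemeasurable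
          hg3.aestronglyMeasurable]
    have hi1 : Integrable (fun p : ℝ × ℝ × ℝ =>
        (if p.2.1 ≤ p.1 then (1:ℝ) else 0) * (if p.2.2 ≤ p.1 then 1 else 0)) (ν.prod (ν.prod ν)) :=
      mw_integrable_ite_mul m1 m2
    have hi2 : Integrable (fun p : ℝ × ℝ × ℝ =>
        (if p.1 ≤ p.2.1 then (1:ℝ) else 0) * (if p.2.2 ≤ p.2.1 then 1 else 0)) (ν.prod (ν.prod ν)) :=
      mw_integrable_ite_mul m3 m4
    have hi3 : Integrable (fun p : ℝ × ℝ × ℝ =>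
        (if p.1 ≤ p.2.2 then (1:ℝ) else 0) * (if p.2.1 ≤ p.2.2 then 1 else 0)) (ν.prod (ν.prod ν)) :=
      mw_integrable_ite_mul m5 m6
    have hsum : ∫ p : ℝ × ℝ × ℝ,
        ((if p.2.1 ≤ p.1 then (1:ℝ) else 0) * (if p.2.2 ≤ p.1 then 1 else 0)
        + (if p.1 ≤ p.2.1 then (1:ℝ) else 0) * (if p.2.2 ≤ p.2.1 then 1 else 0)
        + (if p.1 ≤ p.2.2 then (1:ℝ) else 0) * (if p.2.1 ≤ p.2.2 then 1 else 0))
          ∂(ν.prod (ν.prod ν)) = 1 := by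
      rw [integral_congr_ae ((mw_ae_ne3 ν hatomless).mono fun p hp =>
        mw_three_max hp.1 hp.2.1 hp.2.2)]
      simp
    have hi12 : Integrable (fun p : ℝ × ℝ × ℝ =>
        (if p.2.1 ≤ p.1 then (1:ℝ) else 0) * (if p.2.2 ≤ p.1 then 1 else 0)
        + (if p.1 ≤ p.2.1 then (1:ℝ) else 0) * (if p.2.2 ≤ p.2.1 then 1 else 0))
        (ν.prod (ν.prod ν)) := hi1.add hi2
    rw [integral_add hi12 hi3, integral_add hi1 hi2, h1, h2, h3] at hsum
    linarith
  have key3min : ∀ a b c : Fin m ⊕ Fin n, a ≠ b → a ≠ c → b ≠ c →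
      ∫ ω, (if Z a ω ≤ Z b ω then (1:ℝ) else 0) * (if Z a ω ≤ Z c ω then 1 else 0) ∂μ
        = 1/3 := by
    intro a b c hab hac hbc
    have m1 : MeasurableSet {p : ℝ × ℝ × ℝ | p.1 ≤ p.2.1} :=
      measurableSet_le measurable_fst (measurable_fst.comp measurable_snd)
    have m2 : MeasurableSet {p : ℝ × ℝ × ℝ | p.1 ≤ p.2.2} :=
      measurableSet_le measurable_fst (measurable_snd.comp measurable_snd)
    have m3 : MeasurableSet {p : ℝ × ℝ × ℝ | p.2.1 ≤ p.1} :=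
      measurableSet_le (measurable_fst.comp measurable_snd) measurable_fst
    have m4 : MeasurableSet {p : ℝ × ℝ × ℝ | p.2.1 ≤ p.2.2} :=
      measurableSet_le (measurable_fst.comp measurable_snd) (measurable_snd.comp measurable_snd)
    have m5 : MeasurableSet {p : ℝ × ℝ × ℝ | p.2.2 ≤ p.1} :=
      measurableSet_le (measurable_snd.comp measurable_snd) measurable_fst
    have m6 : MeasurableSet {p : ℝ × ℝ × ℝ | p.2.2 ≤ p.2.1} :=
      measurableSet_le (measurable_snd.comp measurable_snd) (measurable_fst.comp measurable_snd)
    have hmeas_ite : ∀ {s : Set (ℝ × ℝ × ℝ)}, MeasurableSet s →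
        Measurable (fun p => if p ∈ s then (1:ℝ) else 0) := fun hs =>
      Measurable.ite hs measurable_const measurable_const
    have hg1 : Measurable fun p : ℝ × ℝ × ℝ =>
        (if p.1 ≤ p.2.1 then (1:ℝ) else 0) * (if p.1 ≤ p.2.2 then 1 else 0) :=
      (hmeas_ite m1).mul (hmeas_ite m2)
    have hg2 : Measurable fun p : ℝ × ℝ × ℝ =>
        (if p.2.1 ≤ p.1 then (1:ℝ) else 0) * (if p.2.1 ≤ p.2.2 then 1 else 0) :=
      (hmeas_ite m3).mul (hmeas_ite m4)
    have hg3 : Measurable fun p : ℝ × ℝ × ℝ =>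
        (if p.2.2 ≤ p.1 then (1:ℝ) else 0) * (if p.2.2 ≤ p.2.1 then 1 else 0) :=
      (hmeas_ite m5).mul (hmeas_ite m6)
    have h1 : ∫ p : ℝ × ℝ × ℝ,
        ((if p.1 ≤ p.2.1 then (1:ℝ) else 0) * (if p.1 ≤ p.2.2 then 1 else 0)) ∂(ν.prod (ν.prod ν))
        = ∫ ω, (if Z a ω ≤ Z b ω then (1:ℝ) else 0) * (if Z a ω ≤ Z c ω then 1 else 0) ∂μ := by
      rw [← htrip a b c hab hac hbc,
        integral_map ((hZm a).prodMk ((hZm b).prodMk (hZm c))).aemeasurable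
          hg1.aestronglyMeasurable]
    have h2 : ∫ p : ℝ × ℝ × ℝ,
        ((if p.2.1 ≤ p.1 then (1:ℝ) else 0) * (if p.2.1 ≤ p.2.2 then 1 else 0)) ∂(ν.prod (ν.prod ν))
        = ∫ ω, (if Z a ω ≤ Z b ω then (1:ℝ) else 0) * (if Z a ω ≤ Z c ω then 1 else 0) ∂μ := by
      rw [← htrip b a c hab.symm hbc hac,
        integral_map ((hZm b).prodMk ((hZm a).prodMk (hZm c))).aemeasurable
          hg2.aestronglyMeasurable]
    have h3 : ∫ p : ℝ × ℝ × ℝ,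
        ((if p.2.2 ≤ p.1 then (1:ℝ) else 0) * (if p.2.2 ≤ p.2.1 then 1 else 0)) ∂(ν.prod (ν.prod ν))
        = ∫ ω, (if Z a ω ≤ Z b ω then (1:ℝ) else 0) * (if Z a ω ≤ Z c ω then 1 else 0) ∂μ := by
      rw [← htrip b c a hbc hab.symm hac.symm,
        integral_map ((hZm b).prodMk ((hZm c).prodMk (hZm a))).aemeasurable
          hg3.aestronglyMeasurable]
    have hi1 : Integrable (fun p : ℝ × ℝ × ℝ =>
        (if p.1 ≤ p.2.1 then (1:ℝ) else 0) * (if p.1 ≤ p.2.2 then 1 else 0)) (ν.prod (ν.prod ν)) :=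
      mw_integrable_ite_mul m1 m2
    have hi2 : Integrable (fun p : ℝ × ℝ × ℝ =>
        (if p.2.1 ≤ p.1 then (1:ℝ) else 0) * (if p.2.1 ≤ p.2.2 then 1 else 0)) (ν.prod (ν.prod ν)) :=
      mw_integrable_ite_mul m3 m4
    have hi3 : Integrable (fun p : ℝ × ℝ × ℝ =>
        (if p.2.2 ≤ p.1 then (1:ℝ) else 0) * (if p.2.2 ≤ p.2.1 then 1 else 0)) (ν.prod (ν.prod ν)) :=
      mw_integrable_ite_mul m5 m6
    have hsum : ∫ p : ℝ × ℝ × ℝ,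
        ((if p.1 ≤ p.2.1 then (1:ℝ) else 0) * (if p.1 ≤ p.2.2 then 1 else 0)
        + (if p.2.1 ≤ p.1 then (1:ℝ) else 0) * (if p.2.1 ≤ p.2.2 then 1 else 0)
        + (if p.2.2 ≤ p.1 then (1:ℝ) else 0) * (if p.2.2 ≤ p.2.1 then 1 else 0))
          ∂(ν.prod (ν.prod ν)) = 1 := by
      rw [integral_congr_ae ((mw_ae_ne3 ν hatomless).mono fun p hp =>
        mw_three_min hp.1 hp.2.1 hp.2.2)]
      simp
    have hi12 : Integrable (fun p : ℝ × ℝ × ℝ =>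
        (if p.1 ≤ p.2.1 then (1:ℝ) else 0) * (if p.1 ≤ p.2.2 then 1 else 0)
        + (if p.2.1 ≤ p.1 then (1:ℝ) else 0) * (if p.2.1 ≤ p.2.2 then 1 else 0))
        (ν.prod (ν.prod ν)) := hi1.add hi2
    rw [integral_add hi12 hi3, integral_add hi1 hi2, h1, h2, h3] at hsum
    linarith
  have key4 : ∀ a b c d : Fin m ⊕ Fin n, a ≠ b → c ≠ d → a ≠ c → a ≠ d → b ≠ c → b ≠ d →
      ∫ ω, (if Z b ω ≤ Z a ω then (1:ℝ) else 0) * (if Z d ω ≤ Z c ω then 1 else 0) ∂μ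
        = 1/4 := by
    intro a b c d hab hcd hac had hbc hbd
    have hφ : Measurable fun q : ℝ × ℝ => if q.2 ≤ q.1 then (1:ℝ) else 0 :=
      Measurable.ite (measurableSet_le measurable_snd measurable_fst)
        measurable_const measurable_const
    have hind : IndepFun (fun ω => if Z b ω ≤ Z a ω then (1:ℝ) else 0)
        (fun ω => if Z d ω ≤ Z c ω then (1:ℝ) else 0) μ :=
      (hindep.indepFun_prodMk_prodMk hZm a b c d hac had hbc hbd).comp hφ hφ
    have hIa : Integrable (fun ω => if Z b ω ≤ Z a ω then (1:ℝ) else 0) μ :=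
      mw_integrable_ite (measurableSet_le (hZm b) (hZm a))
    have hIc : Integrable (fun ω => if Z d ω ≤ Z c ω then (1:ℝ) else 0) μ :=
      mw_integrable_ite (measurableSet_le (hZm d) (hZm c))
    have hmul := hind.integral_mul_eq_mul_integral hIa.aestronglyMeasurable hIc.aestronglyMeasurable
    rw [show ((fun ω => if Z b ω ≤ Z a ω then (1:ℝ) else 0)
        * (fun ω => if Z d ω ≤ Z c ω then (1:ℝ) else 0))
      = fun ω => (if Z b ω ≤ Z a ω then (1:ℝ) else 0) * (if Z d ω ≤ Z c ω then 1 else 0)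
      from rfl] at hmul
    rw [hmul, key2 a b hab, key2 c d hcd]; norm_num
  -- abbreviation for the summands
  have hU : (fun a => ∑ i, ∑ j, if Xs i a ≥ Ys j a then (1 : ℝ) else 0)
      = fun a => ∑ p : Fin m × Fin n, (if Ys p.2 a ≤ Xs p.1 a then (1:ℝ) else 0) := by
    funext a
    rw [Fintype.sum_prod_type]
  rw [hU]
  have hAm : ∀ p : Fin m × Fin n,
      Measurable fun ω => if Ys p.2 ω ≤ Xs p.1 ω then (1:ℝ) else 0 :=
    fun p => Measurable.ite (measurableSet_le (hYs p.2) (hXs p.1))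
      measurable_const measurable_const
  have hAint : ∀ p : Fin m × Fin n,
      Integrable (fun ω => if Ys p.2 ω ≤ Xs p.1 ω then (1:ℝ) else 0) μ :=
    fun p => mw_integrable_ite (measurableSet_le (hYs p.2) (hXs p.1))
  have hAAint : ∀ p q : Fin m × Fin n, Integrable (fun ω =>
      (if Ys p.2 ω ≤ Xs p.1 ω then (1:ℝ) else 0)
        * (if Ys q.2 ω ≤ Xs q.1 ω then 1 else 0)) μ :=
    fun p q => mw_integrable_ite_mul (measurableSet_le (hYs p.2) (hXs p.1))
      (measurableSet_le (hYs q.2) (hXs q.1))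
  have hEA : ∀ p : Fin m × Fin n,
      ∫ ω, (if Ys p.2 ω ≤ Xs p.1 ω then (1:ℝ) else 0) ∂μ = 1/2 :=
    fun p => key2 (Sum.inl p.1) (Sum.inr p.2) (by simp)
  have hEAA : ∀ p q : Fin m × Fin n,
      ∫ ω, (if Ys p.2 ω ≤ Xs p.1 ω then (1:ℝ) else 0)
        * (if Ys q.2 ω ≤ Xs q.1 ω then 1 else 0) ∂μ
      = 1/4 + (if p.1 = q.1 then (1:ℝ)/12 else 0) + (if p.2 = q.2 then 1/12 else 0)
        + (if p = q then 1/12 else 0) := by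
    intro p q
    by_cases h1 : p.1 = q.1 <;> by_cases h2 : p.2 = q.2
    · have hpq : p = q := Prod.ext h1 h2
      subst hpq
      have hsq : ∀ ω, (if Ys p.2 ω ≤ Xs p.1 ω then (1:ℝ) else 0)
          * (if Ys p.2 ω ≤ Xs p.1 ω then (1:ℝ) else 0)
          = (if Ys p.2 ω ≤ Xs p.1 ω then (1:ℝ) else 0) := fun ω => by
        by_cases h : Ys p.2 ω ≤ Xs p.1 ω <;> simp [h]
      simp only [hsq]
      rw [hEA p]
      norm_num
    · have key := key3max (Sum.inl p.1) (Sum.inr p.2) (Sum.inr q.2)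
        (by simp) (by simp) (by simp [h2])
      have hne : p ≠ q := fun h => h2 (by rw [h])
      rw [if_pos h1, if_neg h2, if_neg hne, ← h1,
        show (1:ℝ)/4 + 1/12 + 0 + 0 = 1/3 by norm_num]
      exact key
    · have key := key3min (Sum.inr p.2) (Sum.inl p.1) (Sum.inl q.1)
        (by simp) (by simp) (by simp [h1])
      have hne : p ≠ q := fun h => h1 (by rw [h])
      rw [if_neg h1, if_pos h2, if_neg hne, ← h2,
        show (1:ℝ)/4 + 0 + 1/12 + 0 = 1/3 by norm_num]
      exact key
    · have key := key4 (Sum.inl p.1) (Sum.inr p.2) (Sum.inl q.1) (Sum.inr q.2)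
        (by simp) (by simp) (by simp [h1]) (by simp) (by simp) (by simp [h2])
      have hne : p ≠ q := fun h => h1 (by rw [h])
      rw [if_neg h1, if_neg h2, if_neg hne,
        show (1:ℝ)/4 + 0 + 0 + 0 = 1/4 by norm_num]
      exact key
  have hAmsum : Measurable fun ω =>
      ∑ p : Fin m × Fin n, (if Ys p.2 ω ≤ Xs p.1 ω then (1:ℝ) else 0) :=
    Finset.measurable_sum _ fun p _ => hAm p
  have hbound : ∀ ω,
      ‖∑ p : Fin m × Fin n, (if Ys p.2 ω ≤ Xs p.1 ω then (1:ℝ) else 0)‖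
        ≤ (Fintype.card (Fin m × Fin n) : ℝ) := by
    intro ω
    calc ‖∑ p : Fin m × Fin n, (if Ys p.2 ω ≤ Xs p.1 ω then (1:ℝ) else 0)‖
        ≤ ∑ p : Fin m × Fin n, ‖(if Ys p.2 ω ≤ Xs p.1 ω then (1:ℝ) else 0)‖ :=
          norm_sum_le _ _
      _ ≤ ∑ _p : Fin m × Fin n, (1:ℝ) := Finset.sum_le_sum fun p _ => by
          by_cases h : Ys p.2 ω ≤ Xs p.1 ω <;> simp [h]
      _ = (Fintype.card (Fin m × Fin n) : ℝ) := by
          simp [Finset.sum_const, Finset.card_univ]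
  have hmem : MemLp (fun ω =>
      ∑ p : Fin m × Fin n, (if Ys p.2 ω ≤ Xs p.1 ω then (1:ℝ) else 0)) 2 μ :=
    (memLp_top_of_bound hAmsum.aestronglyMeasurable _
      (ae_of_all _ hbound)).mono_exponent le_top
  rw [variance_eq_sub hmem]
  have hEU : ∫ ω, (∑ p : Fin m × Fin n,
      (if Ys p.2 ω ≤ Xs p.1 ω then (1:ℝ) else 0)) ∂μ = (m*n : ℝ)/2 := by
    rw [integral_finset_sum _ fun p _ => hAint p]
    simp only [hEA]
    simp [Finset.sum_const, Finset.card_univ]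
    ring
  have hsq : (fun ω => ∑ p : Fin m × Fin n,
      (if Ys p.2 ω ≤ Xs p.1 ω then (1:ℝ) else 0)) ^ 2
      = fun ω => ∑ p : Fin m × Fin n, ∑ q : Fin m × Fin n,
        (if Ys p.2 ω ≤ Xs p.1 ω then (1:ℝ) else 0)
          * (if Ys q.2 ω ≤ Xs q.1 ω then 1 else 0) := by
    funext ω
    simp only [Pi.pow_apply, sq]
    rw [Finset.sum_mul_sum]
  simp only [hsq]
  rw [integral_finset_sum _ fun p _ =>
    integrable_finset_sum _ fun q _ => hAAint p q]
  have hint2 : ∀ p : Fin m × Fin n, ∫ ω, (∑ q : Fin m × Fin n,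
      (if Ys p.2 ω ≤ Xs p.1 ω then (1:ℝ) else 0)
        * (if Ys q.2 ω ≤ Xs q.1 ω then 1 else 0)) ∂μ
      = ∑ q : Fin m × Fin n, (1/4 + (if p.1 = q.1 then (1:ℝ)/12 else 0)
        + (if p.2 = q.2 then 1/12 else 0) + (if p = q then 1/12 else 0)) := by
    intro p
    rw [integral_finset_sum _ fun q _ => hAAint p q]
    exact Finset.sum_congr rfl fun q _ => hEAA p q
  simp only [hint2]
  have inner1 : ∀ p : Fin m × Fin n,
      (∑ q : Fin m × Fin n, if p.1 = q.1 then (1:ℝ)/12 else 0) = n * (1/12) := by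
    intro p
    rw [Fintype.sum_prod_type]
    have h : ∀ q1 : Fin m, (∑ _q2 : Fin n, if p.1 = q1 then (1:ℝ)/12 else 0)
        = if p.1 = q1 then (n:ℝ) * (1/12) else 0 := by
      intro q1
      by_cases h : p.1 = q1 <;>
        simp [h, Finset.sum_const, Finset.card_univ, mul_comm]
    simp only [h]
    rw [Finset.sum_ite_eq]
    simp
  have inner2 : ∀ p : Fin m × Fin n,
      (∑ q : Fin m × Fin n, if p.2 = q.2 then (1:ℝ)/12 else 0) = m * (1/12) := by
    intro p
    rw [Fintype.sum_prod_type]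
    have h : ∀ _q1 : Fin m, (∑ q2 : Fin n, if p.2 = q2 then (1:ℝ)/12 else 0)
        = (1:ℝ)/12 := by
      intro q1
      rw [Finset.sum_ite_eq]
      simp
    simp only [h]
    simp [Finset.sum_const, Finset.card_univ, mul_comm]
  have inner3 : ∀ p : Fin m × Fin n,
      (∑ q : Fin m × Fin n, if p = q then (1:ℝ)/12 else 0) = 1/12 := by
    intro p
    rw [Finset.sum_ite_eq]
    simp
  have hinner : ∀ p : Fin m × Fin n, (∑ q : Fin m × Fin n,
      (1/4 + (if p.1 = q.1 then (1:ℝ)/12 else 0)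
        + (if p.2 = q.2 then 1/12 else 0) + (if p = q then 1/12 else 0)))
      = (m*n:ℝ)/4 + n * (1/12) + m * (1/12) + 1/12 := by
    intro p
    rw [Finset.sum_add_distrib, Finset.sum_add_distrib, Finset.sum_add_distrib,
      inner1 p, inner2 p, inner3 p]
    congr 1
    congr 1
    congr 1
    simp [Finset.sum_const, Finset.card_univ]
    ring
  simp only [hinner]
  rw [Finset.sum_const, Finset.card_univ, hEU]
  simp only [Fintype.card_prod, Fintype.card_fin, nsmul_eq_mul]
  push_cast
  ring
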